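/- (Bargmann–Fock / Wick quantization formula.) Let C, ψ : ℂ → ℂ be entire functions, n ∈ ℕ, and define on ℝ³ (coordinates (x,y,θ), z = x+iy) the observable F(x,y,θ) = C(z)·(z̄/(2i))ⁿ and the polarized wave function Ψ(x,y,θ) = ψ(z)·e^{−|z|²/(4ħ)}·e^{iθ}. Then the Wick quantum product F •ν Ψ := Σ_{k≥0} (2ħ)^k (1/k!) (∂_z̄^k F)·((∂_z^#)^k Ψ) (a finite sum, all terms with k > n vanishing) equals (ħ/i)ⁿ · C(z) · ψ^{(n)}(z) · e^{−|z|²/(4ħ)} · e^{iθ}, where ψ^{(n)} is the n-th complex derivative of ψ. -/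

import Mathlib

open Complex

/-- Partial derivative in the first coordinate `x`. -/
noncomputable def dX (f : ℝ × ℝ × ℝ → ℂ) : ℝ × ℝ × ℝ → ℂ :=
  fun v => deriv (fun s => f (s, v.2.1, v.2.2)) v.1

/-- Partial derivative in the second coordinate `y`. -/
noncomputable def dY (f : ℝ × ℝ × ℝ → ℂ) : ℝ × ℝ × ℝ → ℂ :=
  fun v => deriv (fun s => f (v.1, s, v.2.2)) v.2.1

/-- Partial derivative in the fiber coordinate `θ` (third coordinate). -/
noncomputable def dT (f : ℝ × ℝ × ℝ → ℂ) : ℝ × ℝ × ℝ → ℂ :=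
  fun v => deriv (fun s => f (v.1, v.2.1, s)) v.2.2

/-- The Wirtinger operator `∂_z = (1/2)(∂_x − i∂_y)`. -/
noncomputable def dZ (f : ℝ × ℝ × ℝ → ℂ) : ℝ × ℝ × ℝ → ℂ :=
  fun v => (1 / 2 : ℂ) * (dX f v - Complex.I * dY f v)

/-- The Wirtinger operator `∂_z̄ = (1/2)(∂_x + i∂_y)`. -/
noncomputable def dZbar (f : ℝ × ℝ × ℝ → ℂ) : ℝ × ℝ × ℝ → ℂ :=
  fun v => (1 / 2 : ℂ) * (dX f v + Complex.I * dY f v)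

/-- The horizontal lift `∂_z^# = ∂_z − (z̄/(4iħ))∂_θ` with respect to the connection form
`α = (1/(4iħ))(z̄ dz − z dz̄) + dθ`. -/
noncomputable def BZ (hb : ℝ) (f : ℝ × ℝ × ℝ → ℂ) : ℝ × ℝ × ℝ → ℂ :=
  fun v => dZ f v -
    (starRingEnd ℂ) ((v.1 : ℂ) + Complex.I * (v.2.1 : ℂ)) / (4 * Complex.I * (hb : ℂ)) *
      dT f v

def Zc (v : ℝ × ℝ × ℝ) : ℂ := (v.1 : ℂ) + Complex.I * (v.2.1 : ℂ)

lemma conj_Zc (s t : ℝ) : (starRingEnd ℂ) ((s:ℂ) + Complex.I * (t:ℂ)) = (s:ℂ) - Complex.I * (t:ℂ) := by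
  simp [map_add, map_mul, Complex.conj_ofReal, Complex.conj_I]; ring

lemma dZbar_sep (f g g' : ℂ → ℂ) (hf : Differentiable ℂ f)
    (hg : ∀ w, HasDerivAt g (g' w) w) (v : ℝ × ℝ × ℝ) :
    dZbar (fun v => f (Zc v) * g ((starRingEnd ℂ) (Zc v))) v
      = f (Zc v) * g' ((starRingEnd ℂ) (Zc v)) := by
  obtain ⟨x, y, θ⟩ := v
  have hX : dX (fun v => f (Zc v) * g ((starRingEnd ℂ) (Zc v))) (x, y, θ)
      = deriv f ((x:ℂ) + Complex.I * y) * g ((x:ℂ) - Complex.I * y)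
        + f ((x:ℂ) + Complex.I * y) * g' ((x:ℂ) - Complex.I * y) := by
    have h1 : HasDerivAt (fun u : ℂ => f (u + Complex.I * y) * g (u - Complex.I * y))
        (deriv f ((x:ℂ) + Complex.I * y) * g ((x:ℂ) - Complex.I * y)
          + f ((x:ℂ) + Complex.I * y) * g' ((x:ℂ) - Complex.I * y)) (x : ℂ) := by
      have hfd : HasDerivAt (fun u : ℂ => f (u + Complex.I * y))
          (deriv f ((x:ℂ) + Complex.I * y)) (x:ℂ) := by
        simpa [Function.comp_def] using (hf _).hasDerivAt.comp (x:ℂ) ((hasDerivAt_id (x:ℂ)).add_const (Complex.I * y))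
      have hgd : HasDerivAt (fun u : ℂ => g (u - Complex.I * y))
          (g' ((x:ℂ) - Complex.I * y)) (x:ℂ) := by
        simpa [Function.comp_def] using (hg _).comp (x:ℂ) ((hasDerivAt_id (x:ℂ)).sub_const (Complex.I * y))
      exact hfd.mul hgd
    have h2 := h1.comp_ofReal (z := x)
    have h3 : (fun s : ℝ => (fun v => f (Zc v) * g ((starRingEnd ℂ) (Zc v))) (s, (x,y,θ).2.1, (x,y,θ).2.2))
        = fun s : ℝ => f ((s:ℂ) + Complex.I * y) * g ((s:ℂ) - Complex.I * y) := by
      funext s; simp only [Zc, conj_Zc]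
    rw [dX, h3]
    exact h2.deriv
  have hY : dY (fun v => f (Zc v) * g ((starRingEnd ℂ) (Zc v))) (x, y, θ)
      = deriv f ((x:ℂ) + Complex.I * y) * g ((x:ℂ) - Complex.I * y) * Complex.I
        - f ((x:ℂ) + Complex.I * y) * g' ((x:ℂ) - Complex.I * y) * Complex.I := by
    have h1 : HasDerivAt (fun u : ℂ => f ((x:ℂ) + Complex.I * u) * g ((x:ℂ) - Complex.I * u))
        (deriv f ((x:ℂ) + Complex.I * y) * Complex.I * g ((x:ℂ) - Complex.I * y)
          + f ((x:ℂ) + Complex.I * y) * (g' ((x:ℂ) - Complex.I * y) * (-Complex.I))) (y : ℂ) := by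
      have hfd : HasDerivAt (fun u : ℂ => f ((x:ℂ) + Complex.I * u))
          (deriv f ((x:ℂ) + Complex.I * y) * Complex.I) (y:ℂ) := by
        simpa [Function.comp_def] using (hf _).hasDerivAt.comp (y:ℂ)
          (((hasDerivAt_id (y:ℂ)).const_mul Complex.I).const_add (x:ℂ))
      have hgd : HasDerivAt (fun u : ℂ => g ((x:ℂ) - Complex.I * u))
          (g' ((x:ℂ) - Complex.I * y) * (-Complex.I)) (y:ℂ) := by
        simpa [Function.comp_def] using (hg _).comp (y:ℂ) (((hasDerivAt_id (y:ℂ)).const_mul Complex.I).const_sub (x:ℂ))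
      exact hfd.mul hgd
    have h2 := h1.comp_ofReal (z := y)
    have h3 : (fun s : ℝ => (fun v => f (Zc v) * g ((starRingEnd ℂ) (Zc v))) ((x,y,θ).1, s, (x,y,θ).2.2))
        = fun s : ℝ => f ((x:ℂ) + Complex.I * s) * g ((x:ℂ) - Complex.I * s) := by
      funext s; simp only [Zc, conj_Zc]
    rw [dY, h3, h2.deriv]
    ring
  rw [dZbar, hX, hY]
  simp only [Zc, conj_Zc]
  have : Complex.I * Complex.I = -1 := Complex.I_mul_I
  ring_nf
  rw [Complex.I_sq]
  ring

noncomputable def eE (hb : ℝ) (v : ℝ × ℝ × ℝ) : ℂ :=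
  Complex.exp (-(((v.1 ^ 2 + v.2.1 ^ 2) / (4 * hb) : ℝ) : ℂ))
noncomputable def eT (v : ℝ × ℝ × ℝ) : ℂ := Complex.exp (Complex.I * (v.2.2 : ℂ))

lemma BZ_sum (hb : ℝ) (hhb : hb ≠ 0) (m : ℕ) (f g g' : ℕ → ℂ → ℂ)
    (hf : ∀ j, Differentiable ℂ (f j)) (hg : ∀ j w, HasDerivAt (g j) (g' j w) w)
    (v : ℝ × ℝ × ℝ) :
    BZ hb (fun v => (∑ j ∈ Finset.range m, f j (Zc v) * g j ((starRingEnd ℂ) (Zc v)))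
        * eE hb v * eT v) v
      = (∑ j ∈ Finset.range m, (deriv (f j) (Zc v) * g j ((starRingEnd ℂ) (Zc v))
          - f j (Zc v) * g j ((starRingEnd ℂ) (Zc v)) * ((starRingEnd ℂ) (Zc v) / (2 * hb))))
          * eE hb v * eT v := by
  obtain ⟨x, y, θ⟩ := v
  have hX : dX (fun v => (∑ j ∈ Finset.range m, f j (Zc v) * g j ((starRingEnd ℂ) (Zc v)))
      * eE hb v * eT v) (x, y, θ)
      = (((∑ j ∈ Finset.range m, deriv (f j) ((x:ℂ) + Complex.I * y) * g j ((x:ℂ) - Complex.I * y))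
          + (∑ j ∈ Finset.range m, f j ((x:ℂ) + Complex.I * y) * g' j ((x:ℂ) - Complex.I * y)))
          * Complex.exp (-(((x ^ 2 + y ^ 2) / (4 * hb) : ℝ) : ℂ))
        + (∑ j ∈ Finset.range m, f j ((x:ℂ) + Complex.I * y) * g j ((x:ℂ) - Complex.I * y))
          * (Complex.exp (-(((x ^ 2 + y ^ 2) / (4 * hb) : ℝ) : ℂ)) * (-((x / (2 * hb) : ℝ) : ℂ))))
        * Complex.exp (Complex.I * (θ:ℂ)) := by
    have hP : HasDerivAt (fun u : ℂ => ∑ j ∈ Finset.range m, f j (u + Complex.I * y) * g j (u - Complex.I * y))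
        (∑ j ∈ Finset.range m, (deriv (f j) ((x:ℂ) + Complex.I * y) * g j ((x:ℂ) - Complex.I * y)
          + f j ((x:ℂ) + Complex.I * y) * g' j ((x:ℂ) - Complex.I * y))) (x : ℂ) := by
      apply HasDerivAt.fun_sum
      intro j _
      have hfd : HasDerivAt (fun u : ℂ => f j (u + Complex.I * y))
          (deriv (f j) ((x:ℂ) + Complex.I * y)) (x:ℂ) := by
        simpa [Function.comp_def] using (hf j _).hasDerivAt.comp (x:ℂ) ((hasDerivAt_id (x:ℂ)).add_const (Complex.I * y))
      have hgd : HasDerivAt (fun u : ℂ => g j (u - Complex.I * y))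
          (g' j ((x:ℂ) - Complex.I * y)) (x:ℂ) := by
        simpa [Function.comp_def] using (hg j _).comp (x:ℂ) ((hasDerivAt_id (x:ℂ)).sub_const (Complex.I * y))
      exact hfd.mul hgd
    have hPr := hP.comp_ofReal (z := x)
    have hEr : HasDerivAt (fun s : ℝ => Complex.exp (-(((s ^ 2 + y ^ 2) / (4 * hb) : ℝ) : ℂ)))
        (Complex.exp (-(((x ^ 2 + y ^ 2) / (4 * hb) : ℝ) : ℂ)) * (-((x / (2 * hb) : ℝ) : ℂ))) x := by
      have h0 : HasDerivAt (fun s : ℝ => ((s ^ 2 + y ^ 2) / (4 * hb) : ℝ)) (x / (2 * hb)) x := by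
        have := ((hasDerivAt_pow 2 x).add_const (y ^ 2)).div_const (4 * hb)
        convert this using 1 <;> try rfl
        push_cast; field_simp; ring
      exact (h0.ofReal_comp.neg).cexp
    have hfull := (hPr.fun_mul hEr).mul_const (Complex.exp (Complex.I * (θ:ℂ)))
    have h3 : (fun s : ℝ => (fun v => (∑ j ∈ Finset.range m, f j (Zc v) * g j ((starRingEnd ℂ) (Zc v)))
        * eE hb v * eT v) (s, (x,y,θ).2.1, (x,y,θ).2.2))
        = fun s : ℝ => ((fun u : ℂ => ∑ j ∈ Finset.range m, f j (u + Complex.I * y) * g j (u - Complex.I * y)) ((s:ℝ):ℂ))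
            * Complex.exp (-(((s ^ 2 + y ^ 2) / (4 * hb) : ℝ) : ℂ)) * Complex.exp (Complex.I * (θ:ℂ)) := by
      funext s; simp only [Zc, conj_Zc, eE, eT]
    rw [dX, h3, hfull.deriv, Finset.sum_add_distrib]
  have hY : dY (fun v => (∑ j ∈ Finset.range m, f j (Zc v) * g j ((starRingEnd ℂ) (Zc v)))
      * eE hb v * eT v) (x, y, θ)
      = (((∑ j ∈ Finset.range m, deriv (f j) ((x:ℂ) + Complex.I * y) * Complex.I * g j ((x:ℂ) - Complex.I * y))
          + (∑ j ∈ Finset.range m, f j ((x:ℂ) + Complex.I * y) * (g' j ((x:ℂ) - Complex.I * y) * (-Complex.I))))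
          * Complex.exp (-(((x ^ 2 + y ^ 2) / (4 * hb) : ℝ) : ℂ))
        + (∑ j ∈ Finset.range m, f j ((x:ℂ) + Complex.I * y) * g j ((x:ℂ) - Complex.I * y))
          * (Complex.exp (-(((x ^ 2 + y ^ 2) / (4 * hb) : ℝ) : ℂ)) * (-((y / (2 * hb) : ℝ) : ℂ))))
        * Complex.exp (Complex.I * (θ:ℂ)) := by
    have hP : HasDerivAt (fun u : ℂ => ∑ j ∈ Finset.range m, f j ((x:ℂ) + Complex.I * u) * g j ((x:ℂ) - Complex.I * u))
        (∑ j ∈ Finset.range m, (deriv (f j) ((x:ℂ) + Complex.I * y) * Complex.I * g j ((x:ℂ) - Complex.I * y)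
          + f j ((x:ℂ) + Complex.I * y) * (g' j ((x:ℂ) - Complex.I * y) * (-Complex.I)))) (y : ℂ) := by
      apply HasDerivAt.fun_sum
      intro j _
      have hfd : HasDerivAt (fun u : ℂ => f j ((x:ℂ) + Complex.I * u))
          (deriv (f j) ((x:ℂ) + Complex.I * y) * Complex.I) (y:ℂ) := by
        simpa [Function.comp_def] using (hf j _).hasDerivAt.comp (y:ℂ)
          (((hasDerivAt_id (y:ℂ)).const_mul Complex.I).const_add (x:ℂ))
      have hgd : HasDerivAt (fun u : ℂ => g j ((x:ℂ) - Complex.I * u))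
          (g' j ((x:ℂ) - Complex.I * y) * (-Complex.I)) (y:ℂ) := by
        simpa [Function.comp_def] using (hg j _).comp (y:ℂ) (((hasDerivAt_id (y:ℂ)).const_mul Complex.I).const_sub (x:ℂ))
      exact hfd.mul hgd
    have hPr := hP.comp_ofReal (z := y)
    have hEr : HasDerivAt (fun s : ℝ => Complex.exp (-(((x ^ 2 + s ^ 2) / (4 * hb) : ℝ) : ℂ)))
        (Complex.exp (-(((x ^ 2 + y ^ 2) / (4 * hb) : ℝ) : ℂ)) * (-((y / (2 * hb) : ℝ) : ℂ))) y := by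
      have h0 : HasDerivAt (fun s : ℝ => ((x ^ 2 + s ^ 2) / (4 * hb) : ℝ)) (y / (2 * hb)) y := by
        have := (((hasDerivAt_pow 2 y).const_add (x ^ 2))).div_const (4 * hb)
        convert this using 1 <;> try rfl
        push_cast; ring
      exact (h0.ofReal_comp.neg).cexp
    have hfull := (hPr.fun_mul hEr).mul_const (Complex.exp (Complex.I * (θ:ℂ)))
    have h3 : (fun s : ℝ => (fun v => (∑ j ∈ Finset.range m, f j (Zc v) * g j ((starRingEnd ℂ) (Zc v)))
        * eE hb v * eT v) ((x,y,θ).1, s, (x,y,θ).2.2))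
        = fun s : ℝ => ((fun u : ℂ => ∑ j ∈ Finset.range m, f j ((x:ℂ) + Complex.I * u) * g j ((x:ℂ) - Complex.I * u)) ((s:ℝ):ℂ))
            * Complex.exp (-(((x ^ 2 + s ^ 2) / (4 * hb) : ℝ) : ℂ)) * Complex.exp (Complex.I * (θ:ℂ)) := by
      funext s; simp only [Zc, conj_Zc, eE, eT]
    rw [dY, h3, hfull.deriv, Finset.sum_add_distrib]
  have hTd : dT (fun v => (∑ j ∈ Finset.range m, f j (Zc v) * g j ((starRingEnd ℂ) (Zc v)))
      * eE hb v * eT v) (x, y, θ)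
      = (∑ j ∈ Finset.range m, f j ((x:ℂ) + Complex.I * y) * g j ((x:ℂ) - Complex.I * y))
        * Complex.exp (-(((x ^ 2 + y ^ 2) / (4 * hb) : ℝ) : ℂ))
        * (Complex.exp (Complex.I * (θ:ℂ)) * Complex.I) := by
    have h1 : HasDerivAt (fun u : ℂ => Complex.exp (Complex.I * u))
        (Complex.exp (Complex.I * (θ:ℂ)) * Complex.I) (θ:ℂ) := by
      simpa using ((hasDerivAt_id ((θ:ℝ):ℂ)).const_mul Complex.I).cexp
    have h2 := (h1.comp_ofReal (z := θ)).const_mul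
      ((∑ j ∈ Finset.range m, f j ((x:ℂ) + Complex.I * y) * g j ((x:ℂ) - Complex.I * y))
        * Complex.exp (-(((x ^ 2 + y ^ 2) / (4 * hb) : ℝ) : ℂ)))
    have h3 : (fun s : ℝ => (fun v => (∑ j ∈ Finset.range m, f j (Zc v) * g j ((starRingEnd ℂ) (Zc v)))
        * eE hb v * eT v) ((x,y,θ).1, (x,y,θ).2.1, s))
        = fun s : ℝ => ((∑ j ∈ Finset.range m, f j ((x:ℂ) + Complex.I * y) * g j ((x:ℂ) - Complex.I * y))
            * Complex.exp (-(((x ^ 2 + y ^ 2) / (4 * hb) : ℝ) : ℂ))) * Complex.exp (Complex.I * ((s:ℝ):ℂ)) := by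
      funext s; simp only [Zc, conj_Zc, eE, eT]
    rw [dT, h3, h2.deriv]
  rw [BZ, dZ, hX, hY, hTd]
  rw [conj_Zc]
  simp only [Zc, conj_Zc, eE, eT]
  rw [Finset.sum_sub_distrib]
  have hIsum : (∑ j ∈ Finset.range m, deriv (f j) ((x:ℂ) + Complex.I * y) * Complex.I * g j ((x:ℂ) - Complex.I * y))
      = (∑ j ∈ Finset.range m, deriv (f j) ((x:ℂ) + Complex.I * y) * g j ((x:ℂ) - Complex.I * y)) * Complex.I := by
    rw [Finset.sum_mul]; exact Finset.sum_congr rfl fun j _ => by ring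
  have hIsum2 : (∑ j ∈ Finset.range m, f j ((x:ℂ) + Complex.I * y) * (g' j ((x:ℂ) - Complex.I * y) * (-Complex.I)))
      = (∑ j ∈ Finset.range m, f j ((x:ℂ) + Complex.I * y) * g' j ((x:ℂ) - Complex.I * y)) * (-Complex.I) := by
    rw [Finset.sum_mul]; exact Finset.sum_congr rfl fun j _ => by ring
  have hwsum : (∑ j ∈ Finset.range m, f j ((x:ℂ) + Complex.I * y) * g j ((x:ℂ) - Complex.I * y) * (((x:ℂ) - Complex.I * y) / (2 * hb)))
      = (∑ j ∈ Finset.range m, f j ((x:ℂ) + Complex.I * y) * g j ((x:ℂ) - Complex.I * y)) * (((x:ℂ) - Complex.I * y) / (2 * hb)) := by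
    rw [Finset.sum_mul]
  rw [hIsum, hIsum2, hwsum]
  push_cast
  have hbne : (hb : ℂ) ≠ 0 := by exact_mod_cast hhb
  have h2 : Complex.I ^ 2 = -1 := Complex.I_sq
  have h3 : Complex.I ^ 3 = -Complex.I := by rw [pow_succ, h2]; ring
  field_simp
  ring_nf
  simp only [h2, h3]
  ring_nf

-- Pascal recombination for the BZ-iteration step
lemma pascal_sum (a : ℂ) (d : ℕ → ℂ) (k : ℕ) :
    ∑ j ∈ Finset.range (k + 1),
      (d (j+1) * ((k.choose j : ℂ) * a ^ (k - j)) + d j * ((k.choose j : ℂ) * a ^ (k - j + 1)))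
    = ∑ j ∈ Finset.range (k + 1 + 1), d j * (((k+1).choose j : ℂ) * a ^ (k + 1 - j)) := by
  rw [Finset.sum_add_distrib]
  rw [Finset.sum_range_succ' (fun j => d j * (((k+1).choose j : ℂ) * a ^ (k + 1 - j))) (k+1)]
  have h1 : ∀ j, ((k+1).choose (j+1) : ℂ) = (k.choose j : ℂ) + (k.choose (j+1) : ℂ) := by
    intro j; rw [Nat.choose_succ_succ]; push_cast; ring
  have hsplit : ∑ j ∈ Finset.range (k + 1), d (j+1) * (((k+1).choose (j+1) : ℂ) * a ^ (k + 1 - (j+1)))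
      = ∑ j ∈ Finset.range (k + 1), d (j+1) * ((k.choose j : ℂ) * a ^ (k - j))
        + ∑ j ∈ Finset.range (k + 1), d (j+1) * ((k.choose (j+1) : ℂ) * a ^ (k - j)) := by
    rw [← Finset.sum_add_distrib]
    refine Finset.sum_congr rfl fun j hj => ?_
    rw [h1 j]
    have : k + 1 - (j + 1) = k - j := by omega
    rw [this]; ring
  rw [hsplit]
  have hshift : ∑ j ∈ Finset.range (k + 1), d j * ((k.choose j : ℂ) * a ^ (k - j + 1))
      = d 0 * ((k.choose 0 : ℂ) * a ^ (k + 1 - 0))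
        + ∑ j ∈ Finset.range (k + 1), d (j+1) * ((k.choose (j+1) : ℂ) * a ^ (k - j)) := by
    rw [Finset.sum_range_succ (fun j => d (j+1) * ((k.choose (j+1) : ℂ) * a ^ (k - j))) k]
    simp only [Nat.choose_succ_self, Nat.cast_zero]
    rw [Finset.sum_range_succ' (fun j => d j * ((k.choose j : ℂ) * a ^ (k - j + 1))) k]
    have : ∀ j, j < k → k - (j+1) = k - j - 1 := by intro j _; omega
    have hcong : ∑ j ∈ Finset.range k, d (j+1) * ((k.choose (j+1) : ℂ) * a ^ (k - (j+1) + 1))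
        = ∑ j ∈ Finset.range k, d (j+1) * ((k.choose (j+1) : ℂ) * a ^ (k - j)) := by
      refine Finset.sum_congr rfl fun j hj => ?_
      have : k - (j+1) + 1 = k - j := by
        have := Finset.mem_range.mp hj; omega
      rw [this]
    rw [hcong]
    simp only [Nat.sub_zero, Nat.choose_zero_right, Nat.cast_one]
    ring
  rw [hshift]
  simp only [Nat.choose_zero_right, Nat.cast_one, Nat.sub_zero]
  ring

-- the final scalar identity
lemma main_id (hbc : ℂ) (hhb : hbc ≠ 0) (w : ℂ) (d : ℕ → ℂ) (n : ℕ) :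
    ∑ k ∈ Finset.range (n + 1), (2 * hbc) ^ k / (Nat.factorial k : ℂ)
      * ((n.descFactorial k : ℂ) * (1 / (2 * Complex.I)) ^ k * (w / (2 * Complex.I)) ^ (n - k))
      * (∑ j ∈ Finset.range (k + 1), d j * ((k.choose j : ℂ) * (-w / (2 * hbc)) ^ (k - j)))
    = (hbc / Complex.I) ^ n * d n := by
  have hI : Complex.I ≠ 0 := Complex.I_ne_zero
  -- distribute and extend the inner sum to range (n+1)
  have step1 : ∀ k ∈ Finset.range (n+1),
      (2 * hbc) ^ k / (Nat.factorial k : ℂ)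
        * ((n.descFactorial k : ℂ) * (1 / (2 * Complex.I)) ^ k * (w / (2 * Complex.I)) ^ (n - k))
        * (∑ j ∈ Finset.range (k + 1), d j * ((k.choose j : ℂ) * (-w / (2 * hbc)) ^ (k - j)))
      = ∑ j ∈ Finset.range (n + 1),
          (2 * hbc) ^ k / (Nat.factorial k : ℂ)
          * ((n.descFactorial k : ℂ) * (1 / (2 * Complex.I)) ^ k * (w / (2 * Complex.I)) ^ (n - k))
          * (d j * ((k.choose j : ℂ) * (-w / (2 * hbc)) ^ (k - j))) := by
    intro k hk
    rw [Finset.mul_sum]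
    refine Finset.sum_subset ?_ ?_
    · refine Finset.range_subset_range.2 ?_
      have := Finset.mem_range.mp hk; omega
    · intro i hi hi2
      have hki : k < i := by
        have := Finset.mem_range.mp hi
        by_contra hcon
        exact hi2 (Finset.mem_range.mpr (by omega))
      simp [Nat.choose_eq_zero_of_lt hki]
  rw [Finset.sum_congr rfl step1, Finset.sum_comm]
  -- evaluate the inner sum over k for each fixed j
  have step2 : ∀ j ∈ Finset.range (n+1),
      ∑ k ∈ Finset.range (n + 1),
        (2 * hbc) ^ k / (Nat.factorial k : ℂ)
        * ((n.descFactorial k : ℂ) * (1 / (2 * Complex.I)) ^ k * (w / (2 * Complex.I)) ^ (n - k))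
        * (d j * ((k.choose j : ℂ) * (-w / (2 * hbc)) ^ (k - j)))
      = (if j = n then (hbc / Complex.I) ^ n * d n else 0) := by
    intro j hj
    have hjn : j ≤ n := by simpa [Nat.lt_succ_iff] using hj
    set G : ℕ → ℂ := fun k =>
      (2 * hbc) ^ k / (Nat.factorial k : ℂ)
        * ((n.descFactorial k : ℂ) * (1 / (2 * Complex.I)) ^ k * (w / (2 * Complex.I)) ^ (n - k))
        * (d j * ((k.choose j : ℂ) * (-w / (2 * hbc)) ^ (k - j))) with hG
    have hzero : ∀ k ∈ Finset.range j, G k = 0 := by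
      intro k hk
      have : k < j := Finset.mem_range.mp hk
      simp [hG, Nat.choose_eq_zero_of_lt this]
    have hsplitIco : ∑ k ∈ Finset.range (n + 1), G k
        = ∑ k ∈ Finset.Ico j (n+1), G k := by
      rw [Finset.range_eq_Ico, ← Finset.sum_Ico_consecutive (m := 0) (n := j) (k := n+1) G
        (by omega) (by omega)]
      rw [← Finset.range_eq_Ico] at *
      rw [Finset.sum_eq_zero hzero]
      ring
    have hreindex : ∑ k ∈ Finset.Ico j (n+1), G k
        = ∑ m ∈ Finset.range (n + 1 - j), G (j + m) := by
      rw [Finset.sum_Ico_eq_sum_range]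
    have hterm : ∀ m ∈ Finset.range (n + 1 - j), G (j + m)
        = ((2 * hbc) ^ j * (1 / (2 * Complex.I)) ^ j * (n.choose j : ℂ) * d j)
          * (((n-j).choose m : ℂ) * (-w / (2 * Complex.I)) ^ m * (w / (2 * Complex.I)) ^ ((n-j) - m)) := by
      intro m hm
      have hmn : j + m ≤ n := by
        have := Finset.mem_range.mp hm; omega
      have hdesc : ((n.descFactorial (j+m) : ℕ) : ℂ)
          = ((j+m).factorial : ℂ) * (n.choose (j+m) : ℂ) := by
        rw [Nat.descFactorial_eq_factorial_mul_choose]; push_cast; ring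
      have hcc : (n.choose (j+m) : ℂ) * ((j+m).choose j : ℂ)
          = (n.choose j : ℂ) * ((n-j).choose m : ℂ) := by
        have := Nat.choose_mul (n := n) (k := j+m) (s := j) (by omega)
        have h2 : (j + m) - j = m := by omega
        rw [h2] at this
        exact_mod_cast congrArg (fun t : ℕ => (t : ℂ)) this
      have hexp : n - (j + m) = (n - j) - m := by omega
      have hkj : (j + m) - j = m := by omega
      have hfac : ((j+m).factorial : ℂ) ≠ 0 := by
        exact_mod_cast (Nat.factorial_pos (j+m)).ne'
      have hpow : (2 * hbc) ^ m * (1 / (2 * Complex.I)) ^ m * (-w / (2 * hbc)) ^ m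
          = (-w / (2 * Complex.I)) ^ m := by
        rw [← mul_pow, ← mul_pow]
        congr 1
        field_simp
      calc G (j + m)
          = (2 * hbc) ^ (j+m) / ((j+m).factorial : ℂ)
            * (((j+m).factorial : ℂ) * ((n.choose (j+m) : ℂ) * (1 / (2 * Complex.I)) ^ (j+m)
                * (w / (2 * Complex.I)) ^ ((n-j) - m)))
            * (d j * (((j+m).choose j : ℂ) * (-w / (2 * hbc)) ^ m)) := by
            rw [hG]; simp only []; rw [hdesc, hexp, hkj]; ring
        _ = (2 * hbc) ^ (j+m)
            * ((n.choose (j+m) : ℂ) * (1 / (2 * Complex.I)) ^ (j+m)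
                * (w / (2 * Complex.I)) ^ ((n-j) - m))
            * (d j * (((j+m).choose j : ℂ) * (-w / (2 * hbc)) ^ m)) := by
            have hc : ∀ A t : ℂ, (2 * hbc) ^ (j + m) / ((j+m).factorial : ℂ)
                * (((j+m).factorial : ℂ) * A) * t = (2 * hbc) ^ (j + m) * A * t := by
              intro A t
              field_simp
            exact hc _ _
        _ = ((n.choose (j+m) : ℂ) * ((j+m).choose j : ℂ))
            * ((2 * hbc) ^ j * (1 / (2 * Complex.I)) ^ j * d j * (w / (2 * Complex.I)) ^ ((n-j) - m))
            * ((2 * hbc) ^ m * (1 / (2 * Complex.I)) ^ m * (-w / (2 * hbc)) ^ m) := by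
            rw [pow_add, pow_add]
            ring
        _ = ((2 * hbc) ^ j * (1 / (2 * Complex.I)) ^ j * (n.choose j : ℂ) * d j)
          * (((n-j).choose m : ℂ) * (-w / (2 * Complex.I)) ^ m * (w / (2 * Complex.I)) ^ ((n-j) - m)) := by
            rw [hcc, hpow]; ring
    rw [hsplitIco, hreindex, Finset.sum_congr rfl hterm, ← Finset.mul_sum]
    have hrange : n + 1 - j = (n - j) + 1 := by omega
    have hbinom : ∑ m ∈ Finset.range (n + 1 - j),
        (((n-j).choose m : ℂ) * (-w / (2 * Complex.I)) ^ m * (w / (2 * Complex.I)) ^ ((n-j) - m))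
        = ((-w / (2 * Complex.I)) + (w / (2 * Complex.I))) ^ (n - j) := by
      rw [hrange, add_pow]
      refine Finset.sum_congr rfl fun m hm => ?_
      ring
    rw [hbinom]
    have hz : ((-w / (2 * Complex.I)) + (w / (2 * Complex.I))) = 0 := by ring
    rw [hz]
    rcases eq_or_lt_of_le hjn with h | h
    · subst h
      simp only [Nat.sub_self, pow_zero, if_pos rfl, Nat.choose_self, Nat.cast_one]
      have : (2 * hbc) ^ j * (1 / (2 * Complex.I)) ^ j = (hbc / Complex.I) ^ j := by
        rw [← mul_pow]
        congr 1
        field_simp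
      rw [mul_one, this]; simp
    · rw [zero_pow (by omega), if_neg (by omega)]
      ring
  rw [Finset.sum_congr rfl step2, Finset.sum_ite_eq' (Finset.range (n+1)) n
    (fun _ => (hbc / Complex.I) ^ n * d n)]
  simp

/-- Bargmann–Fock / Wick quantization formula: for the observable `F = C(z)(z̄/(2i))ⁿ` and the
polarized wave function `Ψ = ψ(z) e^{−|z|²/(4ħ)} e^{iθ}`, the Wick quantum product
`F •ν Ψ = Σ_k (2ħ)^k (1/k!) (∂_z̄^k F)((∂_z^#)^k Ψ)` equals
`(ħ/i)ⁿ C(z) ψ⁽ⁿ⁾(z) e^{−|z|²/(4ħ)} e^{iθ}`. -/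
theorem bargmann_fock_quantization (hb : ℝ) (hhbar : 0 < hb)
    (C ψ : ℂ → ℂ) (hC : Differentiable ℂ C) (hψ : Differentiable ℂ ψ) (n : ℕ)
    (F Ψ : ℝ × ℝ × ℝ → ℂ)
    (hF : F = fun v => C ((v.1 : ℂ) + Complex.I * (v.2.1 : ℂ)) *
      ((starRingEnd ℂ) ((v.1 : ℂ) + Complex.I * (v.2.1 : ℂ)) / (2 * Complex.I)) ^ n)
    (hΨ : Ψ = fun v => ψ ((v.1 : ℂ) + Complex.I * (v.2.1 : ℂ)) *
      Complex.exp (-(((v.1 ^ 2 + v.2.1 ^ 2) / (4 * hb) : ℝ) : ℂ)) *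
      Complex.exp (Complex.I * (v.2.2 : ℂ))) :
    ∀ v : ℝ × ℝ × ℝ,
      (∑' k : ℕ, (2 * (hb : ℂ)) ^ k / (Nat.factorial k : ℂ) *
          (dZbar^[k] F v * (BZ hb)^[k] Ψ v)) =
      ((hb : ℂ) / Complex.I) ^ n * C ((v.1 : ℂ) + Complex.I * (v.2.1 : ℂ)) *
        deriv^[n] ψ ((v.1 : ℂ) + Complex.I * (v.2.1 : ℂ)) *
        Complex.exp (-(((v.1 ^ 2 + v.2.1 ^ 2) / (4 * hb) : ℝ) : ℂ)) *
        Complex.exp (Complex.I * (v.2.2 : ℂ)) := by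
  have hbne : hb ≠ 0 := ne_of_gt hhbar
  have hbnec : (hb : ℂ) ≠ 0 := by exact_mod_cast hbne
  have hiter : ∀ j : ℕ, Differentiable ℂ (deriv^[j] ψ) := fun j =>
    analyticOnNhd_univ_iff_differentiable.1
      ((analyticOnNhd_univ_iff_differentiable.2 hψ).iterated_deriv j)
  -- closed form for the iterated dZbar of F
  have claim1 : ∀ k : ℕ, dZbar^[k] F = fun v => C (Zc v) *
      ((n.descFactorial k : ℂ) * (1 / (2 * Complex.I)) ^ k
        * ((starRingEnd ℂ) (Zc v) / (2 * Complex.I)) ^ (n - k)) := by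
    intro k
    induction k with
    | zero =>
      funext v
      simp only [Function.iterate_zero, id_eq, hF, Zc, Nat.descFactorial_zero, Nat.cast_one,
        pow_zero, Nat.sub_zero, one_mul]
    | succ k ih =>
      rw [Function.iterate_succ_apply', ih]
      funext v
      have hg : ∀ w : ℂ, HasDerivAt
          (fun w => (n.descFactorial k : ℂ) * (1 / (2 * Complex.I)) ^ k
            * (w / (2 * Complex.I)) ^ (n - k))
          ((n.descFactorial (k+1) : ℂ) * (1 / (2 * Complex.I)) ^ (k+1)
            * (w / (2 * Complex.I)) ^ (n - (k+1))) w := by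
        intro w
        have h1 : HasDerivAt (fun w : ℂ => (w / (2 * Complex.I)) ^ (n - k))
            (((n - k : ℕ) : ℂ) * (w / (2 * Complex.I)) ^ ((n - k) - 1) * (1 / (2 * Complex.I))) w :=
          ((hasDerivAt_id w).div_const (2 * Complex.I)).pow (n - k)
        have h2 := h1.const_mul ((n.descFactorial k : ℂ) * (1 / (2 * Complex.I)) ^ k)
        convert h2 using 1 <;> try rfl
        rw [show n - k - 1 = n - (k+1) from by omega, Nat.descFactorial_succ]
        push_cast
        ring
      exact dZbar_sep C _ _ hC hg v
  -- closed form for the iterated BZ of Ψ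
  have claim2 : ∀ k : ℕ, (BZ hb)^[k] Ψ = fun v =>
      (∑ j ∈ Finset.range (k + 1), deriv^[j] ψ (Zc v)
        * ((k.choose j : ℂ) * (-(starRingEnd ℂ) (Zc v) / (2 * hb)) ^ (k - j)))
      * eE hb v * eT v := by
    intro k
    induction k with
    | zero =>
      funext v
      simp [hΨ, Zc, eE, eT]
    | succ k ih =>
      rw [Function.iterate_succ_apply', ih]
      funext v
      rw [BZ_sum hb hbne (k+1) (fun j => deriv^[j] ψ)
        (fun j w => (k.choose j : ℂ) * (-w / (2 * hb)) ^ (k - j))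
        (fun j w => (k.choose j : ℂ) * (((k - j : ℕ) : ℂ) * (-w / (2 * hb)) ^ ((k - j) - 1)
          * (-1 / (2 * hb))))
        (fun j => hiter j)
        (fun j w => (((hasDerivAt_id w).neg.div_const (2 * hb)).pow (k - j)).const_mul _) v]
      congr 2
      refine Eq.trans (Finset.sum_congr rfl fun j hj => ?_)
        (pascal_sum (-(starRingEnd ℂ) (Zc v) / (2 * hb)) (fun j => deriv^[j] ψ (Zc v)) k)
      have hd : deriv (deriv^[j] ψ) = deriv^[j+1] ψ := (Function.iterate_succ_apply' deriv j ψ).symm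
      rw [hd]
      rw [pow_succ]
      ring
  intro v
  -- the quantum product is a finite sum
  rw [tsum_eq_sum (s := Finset.range (n+1)) (f := fun k => (2 * (hb : ℂ)) ^ k / (Nat.factorial k : ℂ) *
      (dZbar^[k] F v * (BZ hb)^[k] Ψ v)) ?_]
  swap
  · intro k hk
    have hnk : n < k := by
      have := Finset.mem_range.not.mp hk; omega
    change (2 * (hb : ℂ)) ^ k / (Nat.factorial k : ℂ) * (dZbar^[k] F v * (BZ hb)^[k] Ψ v) = 0
    rw [congrFun (claim1 k) v]
    simp [Nat.descFactorial_eq_zero_iff_lt.mpr hnk]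
  -- rewrite each term in closed form and factor
  have hterm : ∀ k ∈ Finset.range (n+1),
      (2 * (hb : ℂ)) ^ k / (Nat.factorial k : ℂ) * (dZbar^[k] F v * (BZ hb)^[k] Ψ v)
      = ((2 * (hb : ℂ)) ^ k / (Nat.factorial k : ℂ)
          * ((n.descFactorial k : ℂ) * (1 / (2 * Complex.I)) ^ k
            * ((starRingEnd ℂ) (Zc v) / (2 * Complex.I)) ^ (n - k))
          * (∑ j ∈ Finset.range (k + 1), deriv^[j] ψ (Zc v)
            * ((k.choose j : ℂ) * (-(starRingEnd ℂ) (Zc v) / (2 * (hb:ℂ))) ^ (k - j))))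
        * (C (Zc v) * (eE hb v * eT v)) := by
    intro k hk
    rw [congrFun (claim1 k) v, congrFun (claim2 k) v]
    push_cast
    ring
  rw [Finset.sum_congr rfl hterm, ← Finset.sum_mul,
    main_id (hb : ℂ) hbnec ((starRingEnd ℂ) (Zc v)) (fun j => deriv^[j] ψ (Zc v)) n]
  simp only [Zc, eE, eT]
  ring
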